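/- Let x_1,...,x_n be positive integers and for each prime p let e_p(x) denote the exponent of p in the prime factorization of x. The GCD matrix S(x_1,...,x_n) is totally nonnegative if and only if for each prime p the sequence (e_p(x_i))_{i=1}^n is monotonic (non-decreasing or non-increasing). -/

import Mathlib

/-- A real matrix is totally nonnegative if every square minor is nonnegative. -/
def TotallyNonneg {n : ℕ} (A : Matrix (Fin n) (Fin n) ℝ) : Prop :=
  ∀ (k : ℕ) (r c : Fin k → Fin n), StrictMono r → StrictMono c →
    0 ≤ (A.submatrix r c).det


open Matrix in
lemma kernelTN : ∀ (k : ℕ) (m : ℕ → ℝ), Monotone m → (∀ u, 0 ≤ m u) →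
    ∀ s t : Fin k → ℕ, StrictMono s → StrictMono t →
      0 ≤ Matrix.det (Matrix.of fun a b => m (min (s a) (t b))) := by
  intro k
  induction k with
  | zero => intro m _ _ s t _ _; simp [Matrix.det_isEmpty]
  | succ k ih =>
    have main : ∀ (m : ℕ → ℝ), Monotone m → (∀ u, 0 ≤ m u) →
        ∀ s t : Fin (k+1) → ℕ, StrictMono s → StrictMono t → s 0 ≤ t 0 →
        0 ≤ Matrix.det (Matrix.of fun a b => m (min (s a) (t b))) := by
      intro m hm hm0 s t hs ht hst
      set A : Matrix (Fin (k+1)) (Fin (k+1)) ℝ := Matrix.of fun a b => m (min (s a) (t b)) with hA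
      set U : Matrix (Fin (k+1)) (Fin (k+1)) ℝ :=
        Matrix.of fun l j => (if l = j then (1:ℝ) else 0) + (if l = 0 ∧ j ≠ 0 then -1 else 0) with hU
      have hUtri : U.det = 1 := by
        have htri : U.BlockTriangular id := by
          intro i j hij
          have h1 : ¬ (i = j) := by
            intro h; subst h; exact lt_irrefl _ hij
          have h2 : ¬ (i = 0 ∧ j ≠ 0) := by
            rintro ⟨rfl, -⟩; exact absurd hij (by simp)
          simp [hU, h1, h2]
        rw [Matrix.det_of_upperTriangular htri]
        apply Finset.prod_eq_one
        intro i _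
        simp [hU]
      have hAU : ∀ i j, (A * U) i j = if j = 0 then A i 0 else A i j - A i 0 := by
        intro i j
        rw [Matrix.mul_apply]
        have key : ∀ l, A i l * U l j =
            (if l = j then A i j else 0) + (if l = 0 then (if j = 0 then 0 else -A i 0) else 0) := by
          intro l
          simp only [hU, Matrix.of_apply, mul_add]
          congr 1
          · by_cases h : l = j <;> simp [h]
          · by_cases h : l = 0 <;> by_cases h2 : j = 0 <;> simp [h, h2]
        rw [Finset.sum_congr rfl fun l _ => key l, Finset.sum_add_distrib,
          Finset.sum_ite_eq' Finset.univ j, Finset.sum_ite_eq' Finset.univ (0 : Fin (k+1))]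
        by_cases h2 : j = 0 <;> simp [h2, sub_eq_add_neg]
      have hdet : A.det = (A * U).det := by rw [Matrix.det_mul, hUtri, mul_one]
      have hrow : ∀ j, (A * U) 0 j = if j = 0 then m (s 0) else 0 := by
        intro j
        rw [hAU]
        have h0 : A 0 0 = m (s 0) := by
          simp [hA, min_eq_left hst]
        by_cases hj : j = 0
        · simp [hj, h0]
        · rw [if_neg hj, if_neg hj, h0]
          have h1 : A 0 j = m (s 0) := by
            have : s 0 ≤ t j := le_trans hst (ht.monotone (Fin.zero_le j))
            simp [hA, min_eq_left this]
          rw [h1, sub_self]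
      rw [hdet, Matrix.det_succ_row_zero]
      rw [Finset.sum_eq_single 0]
      · rw [hrow]
        simp only [if_pos rfl, Fin.val_zero, pow_zero, one_mul]
        have hsub : ((A * U).submatrix Fin.succ (Fin.succAbove 0)) =
            Matrix.of fun (a b : Fin k) =>
              (fun u => m u - m (min u (t 0))) (min (s a.succ) (t b.succ)) := by
          ext a b
          simp only [Matrix.submatrix_apply, Fin.succAbove_zero]
          rw [hAU]
          rw [if_neg (Fin.succ_ne_zero b)]
          have h1 : A a.succ b.succ = m (min (s a.succ) (t b.succ)) := rfl
          have h2 : A a.succ 0 = m (min (s a.succ) (t 0)) := rfl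
          rw [h1, h2]
          have h3 : min (s a.succ) (t 0) = min (min (s a.succ) (t b.succ)) (t 0) := by
            have : t 0 ≤ t b.succ := (ht.monotone (Fin.zero_le _))
            omega
          rw [h3]
          rfl
        rw [hsub]
        have hm' : Monotone (fun u => m u - m (min u (t 0))) := by
          intro u v huv
          simp only
          rcases le_total v (t 0) with h | h
          · rw [min_eq_left (le_trans huv h), min_eq_left h]; simp
          · rcases le_total u (t 0) with h2 | h2
            · rw [min_eq_left h2, min_eq_right h]
              have g1 := hm h
              linarith
            · rw [min_eq_right h2, min_eq_right h]
              linarith [hm huv]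
        have hm'0 : ∀ u, 0 ≤ m u - m (min u (t 0)) := fun u => by
          have := hm (min_le_left u (t 0)); linarith
        have hih := ih _ hm' hm'0 (fun a => s a.succ) (fun b => t b.succ)
          (hs.comp (Fin.strictMono_succ)) (ht.comp (Fin.strictMono_succ))
        have h0 : 0 ≤ m (s 0) := hm0 _
        exact mul_nonneg h0 hih
      · intro j _ hj
        rw [hrow, if_neg hj]
        ring
      · intro h
        exact absurd (Finset.mem_univ 0) h
    intro m hm hm0 s t hs ht
    rcases le_total (s 0) (t 0) with h | h
    · exact main m hm hm0 s t hs ht h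
    · rw [← Matrix.det_transpose]
      have htr : (Matrix.of fun a b => m (min (s a) (t b))).transpose =
          Matrix.of fun a b => m (min (t a) (s b)) := by
        ext a b
        simp [Matrix.transpose_apply, min_comm]
      rw [htr]
      exact main m hm hm0 t s ht hs h

lemma exists_peak_or_valley {f : ℕ → ℕ} (h1 : ¬ Monotone f) (h2 : ¬ Antitone f) :
    ∃ i j k : ℕ, i < j ∧ j < k ∧
      ((f i < f j ∧ f k < f j) ∨ (f j < f i ∧ f j < f k)) := by
  have ha : ∃ a, f (a+1) < f a := by
    by_contra h; push_neg at h; exact h1 (monotone_nat_of_le_succ h)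
  have hcc : ∃ c, f c < f (c+1) := by
    by_contra h; push_neg at h; exact h2 (antitone_nat_of_succ_le h)
  obtain ⟨a, ha⟩ := ha
  obtain ⟨c, hc⟩ := hcc
  rcases lt_trichotomy a c with h | rfl | h
  · obtain ⟨j, hj, hjmin⟩ := Finset.exists_min_image (Finset.Icc (a+1) c) f
      ⟨a+1, Finset.mem_Icc.mpr ⟨le_refl _, h⟩⟩
    rw [Finset.mem_Icc] at hj
    exact ⟨a, j, c+1, by omega, by omega, Or.inr
      ⟨lt_of_le_of_lt (hjmin (a+1) (Finset.mem_Icc.mpr ⟨le_refl _, h⟩)) ha,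
       lt_of_le_of_lt (hjmin c (Finset.mem_Icc.mpr ⟨h, le_refl _⟩)) hc⟩⟩
  · omega
  · obtain ⟨j, hj, hjmax⟩ := Finset.exists_max_image (Finset.Icc (c+1) a) f
      ⟨c+1, Finset.mem_Icc.mpr ⟨le_refl _, h⟩⟩
    rw [Finset.mem_Icc] at hj
    exact ⟨c, j, a+1, by omega, by omega, Or.inl
      ⟨lt_of_lt_of_le hc (hjmax (c+1) (Finset.mem_Icc.mpr ⟨le_refl _, h⟩)),
       lt_of_lt_of_le ha (hjmax a (Finset.mem_Icc.mpr ⟨h, le_refl _⟩))⟩⟩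

lemma strictMono_pair {n : ℕ} {u v : Fin n} (h : u < v) : StrictMono ![u, v] := by
  intro a b hab
  fin_cases a <;> fin_cases b <;> simp_all

lemma gcd_prod_lt {a b c : ℕ} (ha : 0 < a) (hb : 0 < b) (hc : 0 < c) {p : ℕ}
    (hs : b.factorization p < min (a.factorization p) (c.factorization p) ∨
          max (a.factorization p) (c.factorization p) < b.factorization p) :
    Nat.gcd a b * Nat.gcd b c < Nat.gcd a c * b := by
  have hab : Nat.gcd a b ≠ 0 := (Nat.gcd_pos_of_pos_left _ ha).ne'
  have hbc : Nat.gcd b c ≠ 0 := (Nat.gcd_pos_of_pos_left _ hb).ne'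
  have hac : Nat.gcd a c ≠ 0 := (Nat.gcd_pos_of_pos_left _ ha).ne'
  have hA : Nat.gcd a b * Nat.gcd b c ≠ 0 := Nat.mul_ne_zero hab hbc
  have hB : Nat.gcd a c * b ≠ 0 := Nat.mul_ne_zero hac hb.ne'
  have fA : ∀ q, (Nat.gcd a b * Nat.gcd b c).factorization q
      = min (a.factorization q) (b.factorization q)
        + min (b.factorization q) (c.factorization q) := by
    intro q
    rw [Nat.factorization_mul hab hbc, Finsupp.add_apply,
      Nat.factorization_gcd ha.ne' hb.ne', Nat.factorization_gcd hb.ne' hc.ne',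
      Finsupp.inf_apply, Finsupp.inf_apply]
  have fB : ∀ q, (Nat.gcd a c * b).factorization q
      = min (a.factorization q) (c.factorization q) + b.factorization q := by
    intro q
    rw [Nat.factorization_mul hac hb.ne', Finsupp.add_apply,
      Nat.factorization_gcd ha.ne' hc.ne', Finsupp.inf_apply]
  have hdvd : Nat.gcd a b * Nat.gcd b c ∣ Nat.gcd a c * b := by
    rw [← Nat.factorization_le_iff_dvd hA hB, Finsupp.le_def]
    intro q
    rw [fA q, fB q]
    omega
  have hne : Nat.gcd a b * Nat.gcd b c ≠ Nat.gcd a c * b := by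
    intro h
    have h2 := congrArg (fun z => z.factorization p) h
    rw [fA p, fB p] at h2
    omega
  exact lt_of_le_of_ne (Nat.le_of_dvd (Nat.pos_of_ne_zero hB) hdvd) hne
theorem gcd_matrix_TN_iff_monotone_valuations (n : ℕ) (x : Fin n → ℕ)
    (hx : ∀ i, 0 < x i)
    (S : Matrix (Fin n) (Fin n) ℝ)
    (hS : ∀ i j, S i j = (Nat.gcd (x i) (x j) : ℝ)) :
    TotallyNonneg S ↔
      ∀ p : ℕ, p.Prime →
        (Monotone (fun i => (x i).factorization p) ∨
          Antitone (fun i => (x i).factorization p)) := by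
  constructor
  · intro hTN p hp
    by_contra hcon
    push_neg at hcon
    obtain ⟨hmon, hanti⟩ := hcon
    rcases Nat.eq_zero_or_pos n with rfl | hn
    · exact hmon (fun a => a.elim0)
    set cl : ℕ → Fin n := fun u => ⟨min u (n-1), by omega⟩ with hcl
    have hclmono : ∀ u v : ℕ, u ≤ v → cl u ≤ cl v := fun u v huv => by
      simp only [hcl, Fin.mk_le_mk]; omega
    have hclid : ∀ i : Fin n, cl (i : ℕ) = i := fun i => by
      have := i.isLt
      simp only [hcl]
      ext
      simp only
      omega
    have hF1 : ¬ Monotone (fun u => (x (cl u)).factorization p) := by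
      intro hM
      apply hmon
      intro i j hij
      have h2 := hM (show (i:ℕ) ≤ (j:ℕ) from hij)
      simpa [hclid] using h2
    have hF2 : ¬ Antitone (fun u => (x (cl u)).factorization p) := by
      intro hM
      apply hanti
      intro i j hij
      have h2 := hM (show (i:ℕ) ≤ (j:ℕ) from hij)
      simpa [hclid] using h2
    obtain ⟨i, j, k, hij, hjk, hpat⟩ := exists_peak_or_valley hF1 hF2

    have h1 : cl i < cl j := by
      rcases lt_or_eq_of_le (hclmono i j hij.le) with h | h
      · exact h
      · rw [h] at hpat; omega
    have h2 : cl j < cl k := by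
      rcases lt_or_eq_of_le (hclmono j k hjk.le) with h | h
      · exact h
      · rw [h] at hpat; omega
    have hdet := hTN 2 ![cl i, cl j] ![cl j, cl k] (strictMono_pair h1) (strictMono_pair h2)
    rw [Matrix.det_fin_two] at hdet
    simp only [Matrix.submatrix_apply, Matrix.cons_val_zero, Matrix.cons_val_one,
      Matrix.head_cons] at hdet
    rw [hS, hS, hS, hS, Nat.gcd_self] at hdet
    have hlt := gcd_prod_lt (hx (cl i)) (hx (cl j)) (hx (cl k)) (p := p)
      (by rcases hpat with ⟨u1, u2⟩ | ⟨u1, u2⟩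
          · right; omega
          · left; omega)
    have hltR : ((Nat.gcd (x (cl i)) (x (cl j)) * Nat.gcd (x (cl j)) (x (cl k)) : ℕ) : ℝ) <
        ((Nat.gcd (x (cl i)) (x (cl k)) * (x (cl j)) : ℕ) : ℝ) := by exact_mod_cast hlt
    push_cast at hltR
    linarith
  · intro hmono k r c hr hc
    rcases Nat.eq_zero_or_pos n with rfl | hn
    · cases k with
      | zero => simp
      | succ k => exact (r 0).elim0
    set O : Fin n := ⟨0, hn⟩ with hO
    set N : Fin n := ⟨n-1, by omega⟩ with hN
    have hONle : ∀ i : Fin n, O ≤ i ∧ i ≤ N := fun i => by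
      have := i.isLt
      constructor <;> simp only [hO, hN, Fin.le_def] <;> omega
    have hg0 : ∀ y z : Fin n, Nat.gcd (x y) (x z) ≠ 0 :=
      fun y z => (Nat.gcd_pos_of_pos_left _ (hx y)).ne'
    have F1 : ∀ i j : Fin n, i ≤ j →
        Nat.gcd (x O) (x N) * Nat.gcd (x i) (x j)
          = Nat.gcd (x i) (x N) * Nat.gcd (x O) (x j) := by
      intro i j hij
      apply Nat.eq_of_factorization_eq (Nat.mul_ne_zero (hg0 _ _) (hg0 _ _))
        (Nat.mul_ne_zero (hg0 _ _) (hg0 _ _))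
      intro q
      rw [Nat.factorization_mul (hg0 _ _) (hg0 _ _), Nat.factorization_mul (hg0 _ _) (hg0 _ _),
        Finsupp.add_apply, Finsupp.add_apply,
        Nat.factorization_gcd (hx O).ne' (hx N).ne', Nat.factorization_gcd (hx i).ne' (hx j).ne',
        Nat.factorization_gcd (hx i).ne' (hx N).ne', Nat.factorization_gcd (hx O).ne' (hx j).ne',
        Finsupp.inf_apply, Finsupp.inf_apply, Finsupp.inf_apply, Finsupp.inf_apply]
      by_cases hq : q.Prime
      · rcases hmono q hq with hM | hM
        · have e1 : (x O).factorization q ≤ (x i).factorization q := hM (hONle i).1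
          have e2 : (x i).factorization q ≤ (x j).factorization q := hM hij
          have e3 : (x j).factorization q ≤ (x N).factorization q := hM (hONle j).2
          omega
        · have e1 : (x i).factorization q ≤ (x O).factorization q := hM (hONle i).1
          have e2 : (x j).factorization q ≤ (x i).factorization q := hM hij
          have e3 : (x N).factorization q ≤ (x j).factorization q := hM (hONle j).2
          omega
      · rw [Nat.factorization_eq_zero_of_not_prime _ hq, Nat.factorization_eq_zero_of_not_prime _ hq,
          Nat.factorization_eq_zero_of_not_prime _ hq, Nat.factorization_eq_zero_of_not_prime _ hq]
    have F2 : ∀ i j : Fin n, i ≤ j → Nat.gcd (x i) (x N) ≤ Nat.gcd (x j) (x N) := by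
      intro i j hij
      apply Nat.le_of_dvd (Nat.pos_of_ne_zero (hg0 _ _))
      rw [← Nat.factorization_le_iff_dvd (hg0 _ _) (hg0 _ _), Finsupp.le_def]
      intro q
      rw [Nat.factorization_gcd (hx i).ne' (hx N).ne', Nat.factorization_gcd (hx j).ne' (hx N).ne',
        Finsupp.inf_apply, Finsupp.inf_apply]
      by_cases hq : q.Prime
      · rcases hmono q hq with hM | hM
        · have e2 : (x i).factorization q ≤ (x j).factorization q := hM hij
          omega
        · have e2 : (x j).factorization q ≤ (x i).factorization q := hM hij
          have e3 : (x N).factorization q ≤ (x j).factorization q := hM (hONle j).2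
          omega
      · simp [Nat.factorization_eq_zero_of_not_prime _ hq]
    have F3 : ∀ i j : Fin n, i ≤ j → Nat.gcd (x O) (x j) ≤ Nat.gcd (x O) (x i) := by
      intro i j hij
      apply Nat.le_of_dvd (Nat.pos_of_ne_zero (hg0 _ _))
      rw [← Nat.factorization_le_iff_dvd (hg0 _ _) (hg0 _ _), Finsupp.le_def]
      intro q
      rw [Nat.factorization_gcd (hx O).ne' (hx j).ne', Nat.factorization_gcd (hx O).ne' (hx i).ne',
        Finsupp.inf_apply, Finsupp.inf_apply]
      by_cases hq : q.Prime
      · rcases hmono q hq with hM | hM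
        · have e1 : (x O).factorization q ≤ (x i).factorization q := hM (hONle i).1
          have e2 : (x i).factorization q ≤ (x j).factorization q := hM hij
          omega
        · have e2 : (x j).factorization q ≤ (x i).factorization q := hM hij
          omega
      · simp [Nat.factorization_eq_zero_of_not_prime _ hq]
    set cl : ℕ → Fin n := fun u => ⟨min u (n-1), by omega⟩ with hcl
    have hclmono : ∀ u v : ℕ, u ≤ v → cl u ≤ cl v := fun u v huv => by
      simp only [hcl, Fin.mk_le_mk]; omega
    have hclid : ∀ i : Fin n, cl (i : ℕ) = i := fun i => by
      have := i.isLt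
      simp only [hcl]
      ext
      simp only
      omega
    set m : ℕ → ℝ := fun u => (Nat.gcd (x (cl u)) (x N) : ℝ) / (Nat.gcd (x O) (x (cl u)) : ℝ)
      with hmdef
    have hgposR : ∀ y z : Fin n, (0:ℝ) < (Nat.gcd (x y) (x z) : ℝ) := fun y z => by
      exact_mod_cast Nat.pos_of_ne_zero (hg0 y z)
    have hmmono : Monotone m := by
      intro u v huv
      simp only [hmdef]
      rw [div_le_div_iff₀ (hgposR _ _) (hgposR _ _)]
      have hle : Nat.gcd (x (cl u)) (x N) * Nat.gcd (x O) (x (cl v))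
          ≤ Nat.gcd (x (cl v)) (x N) * Nat.gcd (x O) (x (cl u)) :=
        Nat.mul_le_mul (F2 _ _ (hclmono u v huv)) (F3 _ _ (hclmono u v huv))
      exact_mod_cast hle
    have hm0 : ∀ u, 0 ≤ m u := fun u => by
      simp only [hmdef]
      positivity
    have entry : ∀ i j : Fin n, S i j =
        (Nat.gcd (x O) (x i) : ℝ) *
          ((Nat.gcd (x O) (x j) : ℝ) / (Nat.gcd (x O) (x N) : ℝ) * m (min (i:ℕ) (j:ℕ))) := by
      have key : ∀ i j : Fin n, i ≤ j → S i j =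
          (Nat.gcd (x O) (x i) : ℝ) *
            ((Nat.gcd (x O) (x j) : ℝ) / (Nat.gcd (x O) (x N) : ℝ) * m (min (i:ℕ) (j:ℕ))) := by
        intro i j hij
        have hmin : min (i:ℕ) (j:ℕ) = (i:ℕ) := min_eq_left hij
        rw [hS, hmdef]
        simp only [hmin, hclid i]
        have hcast : (Nat.gcd (x O) (x N) : ℝ) * (Nat.gcd (x i) (x j) : ℝ)
            = (Nat.gcd (x i) (x N) : ℝ) * (Nat.gcd (x O) (x j) : ℝ) := by
          exact_mod_cast F1 i j hij
        have hG : (Nat.gcd (x O) (x N) : ℝ) ≠ 0 := (hgposR _ _).ne'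
        have hOi : (Nat.gcd (x O) (x i) : ℝ) ≠ 0 := (hgposR _ _).ne'
        field_simp
        linear_combination hcast
      intro i j
      rcases le_total i j with h | h
      · exact key i j h
      · rw [show S i j = S j i from by rw [hS, hS, Nat.gcd_comm], key j i h, min_comm]
        ring
    set vrow : Fin k → ℝ := fun a => (Nat.gcd (x O) (x (r a)) : ℝ) with hvrow
    set vcol : Fin k → ℝ := fun b =>
      (Nat.gcd (x O) (x (c b)) : ℝ) / (Nat.gcd (x O) (x N) : ℝ) with hvcol
    set M : Matrix (Fin k) (Fin k) ℝ :=
      Matrix.of fun a b => m (min ((r a : ℕ)) ((c b : ℕ))) with hM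
    have hdet : S.submatrix r c = Matrix.of fun a b => vrow a *
        ((Matrix.of fun a b => vcol b * M a b) a b) := by
      ext a b
      simp only [Matrix.submatrix_apply, Matrix.of_apply, hvrow, hvcol, hM]
      rw [entry (r a) (c b)]
    rw [hdet, Matrix.det_mul_column, Matrix.det_mul_row]
    have hK := kernelTN k m hmmono hm0 (fun a => ((r a : ℕ))) (fun b => ((c b : ℕ)))
      (fun a b hab => hr hab) (fun a b hab => hc hab)
    apply mul_nonneg (Finset.prod_nonneg fun y _ => by positivity)
    apply mul_nonneg (Finset.prod_nonneg fun y _ => by positivity)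
    exact hK
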